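/- arXiv:2201.12453 — 11 statements merged into one kernel-verified Lean document; each statement's English description precedes it below -/
import Mathlib

section
/- If x is a nonzero integer with ord_p(x) = ℓ and 0 ≤ ℓ < p, then the ℓ-th iterate of D_p applied to x is not divisible by p, and consequently D_p^{i}(x) = 0 for all i ≥ ℓ+1. -/
def Dp (p : ℕ) (x : ℤ) : ℤ := (x / p) * padicValInt p x

lemma Dp_zero (p : ℕ) : Dp p 0 = 0 := by simp [Dp]

lemma key_step (p : ℕ) (hp : p.Prime) (x : ℤ) (hx : x ≠ 0) (ℓ : ℕ)
    (hv : padicValInt p x = ℓ + 1) (hlt : ℓ + 1 < p) :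
    Dp p x ≠ 0 ∧ padicValInt p (Dp p x) = ℓ := by
  haveI : Fact p.Prime := ⟨hp⟩
  have hpdvd : (p : ℤ) ∣ x := by
    have := padicValInt_dvd (p := p) x
    rw [hv] at this
    exact dvd_trans (dvd_pow_self _ (Nat.succ_ne_zero ℓ)) this
  have hq : x = (p : ℤ) * (x / p) := (Int.mul_ediv_cancel' hpdvd).symm
  have hq0 : x / p ≠ 0 := by
    intro h; rw [h, mul_zero] at hq; exact hx hq
  have hvq : padicValInt p (x / p) = ℓ := by
    have := padicValInt.mul (p := p) (Int.natCast_ne_zero.mpr hp.ne_zero) hq0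
    rw [← hq, hv, padicValInt_self] at this
    omega
  have hndvd : ¬ (p : ℤ) ∣ ((ℓ + 1 : ℕ) : ℤ) := by
    rw [Int.natCast_dvd_natCast]
    exact Nat.not_dvd_of_pos_of_lt (Nat.succ_pos ℓ) hlt
  have hc0 : ((ℓ + 1 : ℕ) : ℤ) ≠ 0 := by exact_mod_cast Nat.succ_ne_zero ℓ
  have hDp : Dp p x = (x / p) * ((ℓ + 1 : ℕ) : ℤ) := by
    rw [Dp, hv]
  constructor
  · rw [hDp]; exact mul_ne_zero hq0 hc0
  · rw [hDp, padicValInt.mul hq0 hc0, hvq, padicValInt.eq_zero_of_not_dvd hndvd]; omega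

lemma main_aux (p : ℕ) (hp : p.Prime) : ∀ (ℓ : ℕ) (x : ℤ), x ≠ 0 →
    padicValInt p x = ℓ → ℓ < p →
    ¬ (p : ℤ) ∣ (Dp p)^[ℓ] x ∧ ∀ i, ℓ + 1 ≤ i → (Dp p)^[i] x = 0 := by
  haveI : Fact p.Prime := ⟨hp⟩
  intro ℓ
  induction ℓ with
  | zero =>
    intro x hx hv _
    constructor
    · simp only [Function.iterate_zero, id]
      intro hdvd
      have : 1 ≤ padicValInt p x := by
        have := (padicValInt_dvd_iff (p := p) 1 x).mp (by simpa using hdvd)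
        tauto
      omega
    · intro i hi
      obtain ⟨j, rfl⟩ : ∃ j, i = j + 1 := ⟨i - 1, by omega⟩
      rw [Function.iterate_succ_apply]
      have h1 : Dp p x = 0 := by rw [Dp, hv]; simp
      rw [h1]
      exact Function.iterate_fixed (Dp_zero p) j
  | succ ℓ ih =>
    intro x hx hv hlt
    obtain ⟨hne, hval⟩ := key_step p hp x hx ℓ hv hlt
    obtain ⟨h1, h2⟩ := ih (Dp p x) hne hval (by omega)
    constructor
    · rw [Function.iterate_succ_apply]; exact h1
    · intro i hi
      obtain ⟨j, rfl⟩ : ∃ j, i = j + 1 := ⟨i - 1, by omega⟩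
      rw [Function.iterate_succ_apply]
      exact h2 j (by omega)

theorem small_ord_eventually_zero (p : ℕ) (hp : p.Prime) (x : ℤ) (hx : x ≠ 0)
    (ℓ : ℕ) (hℓ : padicValInt p x = ℓ) (hℓp : ℓ < p) :
    ¬ (p : ℤ) ∣ (Dp p)^[ℓ] x ∧ ∀ i, ℓ + 1 ≤ i → (Dp p)^[i] x = 0 := by
  exact main_aux p hp ℓ x hx hℓ hℓp
end

section
/- Let x = a·p^{b·p^k} be a nonzero integer with p ∤ ab and k ≥ 1, and set k' = ((k−1) mod p) + 1. Then for every i with 1 ≤ i ≤ k', one has D_p^{i}(x) = a·b·(∏_{j=1}^{i-1}(b·p^k + k − j))·p^{b·p^k + k − i}, and in particular ord_p(D_p^{i}(x)) = b·p^k + k − i. -/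
lemma val_eq (p : ℕ) (hp : p.Prime) (c : ℤ) (hc : ¬ (p : ℤ) ∣ c) (hc0 : c ≠ 0) (n : ℕ) :
    padicValInt p (c * (p : ℤ) ^ n) = n := by
  haveI : Fact p.Prime := ⟨hp⟩
  rw [padicValInt.mul hc0 (pow_ne_zero _ (by exact_mod_cast hp.ne_zero)),
    padicValInt.eq_zero_of_not_dvd hc]
  have : ((p : ℤ) ^ n) = ((p ^ n : ℕ) : ℤ) := by push_cast; ring
  rw [this, padicValInt.of_nat, padicValNat.prime_pow]
  omega

lemma Dp_eq (p : ℕ) (hp : p.Prime) (c : ℤ) (hc : ¬ (p : ℤ) ∣ c) (hc0 : c ≠ 0)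
    (n : ℕ) (hn : 1 ≤ n) :
    Dp p (c * (p : ℤ) ^ n) = c * n * (p : ℤ) ^ (n - 1) := by
  have hpow : (p : ℤ) ^ n = p * (p : ℤ) ^ (n - 1) := by
    rw [← pow_succ']
    congr 1
    omega
  rw [Dp, val_eq p hp c hc hc0 n, hpow, show c * ((p : ℤ) * (p:ℤ) ^ (n-1)) = (p:ℤ) * (c * (p:ℤ)^(n-1)) by ring,
    Int.mul_ediv_cancel_left _ (by exact_mod_cast hp.ne_zero)]
  ring

lemma not_dvd_factor (p b k j : ℕ) (hp : 2 ≤ p) (hk : 1 ≤ k) (hj1 : 1 ≤ j)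
    (hjr : j ≤ (k - 1) % p) : ¬ p ∣ (b * p ^ k + k - j) := by
  intro h
  have hjk : j ≤ k := by
    have := Nat.mod_le (k-1) p; omega
  have heq : b * p ^ k + k - j = b * p ^ k + (k - j) := by omega
  rw [heq] at h
  have h1 : p ∣ b * p ^ k := Dvd.dvd.mul_left (dvd_pow_self p (by omega)) b
  have h2 : p ∣ k - j := (Nat.dvd_add_right h1).mp h
  obtain ⟨m, hm⟩ := h2
  have hmod := Nat.div_add_mod (k - 1) p
  have hltp := Nat.mod_lt (k - 1) (show 0 < p by omega)
  rcases le_or_gt m ((k-1)/p) with hle | hlt2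
  · have h3 : p * m ≤ p * ((k-1)/p) := Nat.mul_le_mul_left p hle
    have h4 : (k-1) % p ≤ k - 1 := Nat.mod_le _ _
    omega
  · have h3 : p * ((k-1)/p) + p ≤ p * m := by
      have h5 := Nat.mul_le_mul_left p hlt2
      rw [Nat.mul_succ] at h5
      exact h5
    have h4 : (k-1) % p ≤ k - 1 := Nat.mod_le _ _
    omega

lemma coeff_props (p : ℕ) (hp : p.Prime) (a : ℤ) (b k t : ℕ)
    (ha : ¬ (p : ℤ) ∣ a) (ha0 : a ≠ 0) (hb : 0 < b) (hbp : ¬ p ∣ b) (hk : 1 ≤ k)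
    (ht : t ≤ (k - 1) % p) :
    ¬ (p : ℤ) ∣ (a * b * ∏ j ∈ Finset.Icc 1 t, ((b * p ^ k + k - j : ℕ) : ℤ)) ∧
      (a * b * ∏ j ∈ Finset.Icc 1 t, ((b * p ^ k + k - j : ℕ) : ℤ)) ≠ 0 := by
  have hpZ : Prime (p : ℤ) := Nat.prime_iff_prime_int.1 hp
  have hfac : ∀ j ∈ Finset.Icc 1 t, ¬ (p : ℤ) ∣ ((b * p ^ k + k - j : ℕ) : ℤ) := by
    intro j hj
    rw [Finset.mem_Icc] at hj
    rw [Int.natCast_dvd_natCast]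
    exact not_dvd_factor p b k j hp.two_le hk hj.1 (le_trans hj.2 ht)
  constructor
  · intro h
    rcases hpZ.dvd_mul.mp h with h1 | h2
    · rcases hpZ.dvd_mul.mp h1 with h3 | h4
      · exact ha h3
      · rw [Int.natCast_dvd_natCast] at h4
        exact hbp h4
    · rw [Prime.dvd_finset_prod_iff hpZ] at h2
      obtain ⟨j, hj, hdj⟩ := h2
      exact hfac j hj hdj
  · apply mul_ne_zero (mul_ne_zero ha0 (by exact_mod_cast hb.ne'))
    rw [Finset.prod_ne_zero_iff]
    intro j hj
    intro h0
    exact hfac j hj (h0 ▸ dvd_zero _)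

theorem segment_formula (p : ℕ) (hp : p.Prime) (a : ℤ) (b k : ℕ)
    (ha : ¬ (p : ℤ) ∣ a) (ha0 : a ≠ 0) (hb : 0 < b) (hbp : ¬ p ∣ b) (hk : 1 ≤ k) :
    ∀ i, 1 ≤ i → i ≤ (k - 1) % p + 1 →
      (Dp p)^[i] (a * (p : ℤ) ^ (b * p ^ k)) =
        a * b * (∏ j ∈ Finset.Icc 1 (i - 1), ((b * p ^ k + k - j : ℕ) : ℤ)) *
          (p : ℤ) ^ (b * p ^ k + k - i) ∧
      padicValInt p ((Dp p)^[i] (a * (p : ℤ) ^ (b * p ^ k))) = b * p ^ k + k - i := by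
  have hp2 : 2 ≤ p := hp.two_le
  have hpk1 : 1 ≤ b * p ^ k := Nat.one_le_iff_ne_zero.mpr (by positivity)
  have hmk : (k - 1) % p ≤ k - 1 := Nat.mod_le _ _
  intro i hi1
  induction i, hi1 using Nat.le_induction with
  | base =>
    intro _
    have hstep := Dp_eq p hp a ha ha0 (b * p ^ k) hpk1
    have hval : (Dp p)^[1] (a * (p : ℤ) ^ (b * p ^ k)) =
        a * b * (∏ j ∈ Finset.Icc 1 (1 - 1), ((b * p ^ k + k - j : ℕ) : ℤ)) *
          (p : ℤ) ^ (b * p ^ k + k - 1) := by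
      rw [Function.iterate_one, hstep]
      have he : b * p ^ k + k - 1 = k + (b * p ^ k - 1) := by omega
      rw [he, pow_add, Finset.Icc_eq_empty (by omega : ¬(1:ℕ) ≤ 1 - 1), Finset.prod_empty]
      push_cast
      ring
    refine ⟨hval, ?_⟩
    rw [hval]
    exact val_eq p hp _ (coeff_props p hp a b k 0 ha ha0 hb hbp hk (by omega)).1
      (coeff_props p hp a b k 0 ha ha0 hb hbp hk (by omega)).2 _
  | succ n hn ih =>
    intro hik
    obtain ⟨m, rfl⟩ : ∃ m, n = m + 1 := ⟨n - 1, by omega⟩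
    have hik' : m + 1 ≤ (k - 1) % p + 1 := by omega
    obtain ⟨hform, hvalv⟩ := ih hik'
    have hC := coeff_props p hp a b k m ha ha0 hb hbp hk (by omega)
    set C : ℤ := a * b * ∏ j ∈ Finset.Icc 1 m, ((b * p ^ k + k - j : ℕ) : ℤ) with hCdef
    have hmk1 : m + 1 ≤ k := by omega
    have hen1 : 1 ≤ b * p ^ k + k - (m + 1) := by omega
    have hstep := Dp_eq p hp C hC.1 hC.2 (b * p ^ k + k - (m + 1)) hen1
    have hiter : (Dp p)^[m + 1 + 1] (a * (p : ℤ) ^ (b * p ^ k)) =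
        Dp p ((Dp p)^[m + 1] (a * (p : ℤ) ^ (b * p ^ k))) :=
      Function.iterate_succ_apply' _ _ _
    have hsimp : m + 1 - 1 = m := by omega
    rw [hsimp] at hform
    have hform2 : (Dp p)^[m + 1 + 1] (a * (p : ℤ) ^ (b * p ^ k)) =
        a * b * (∏ j ∈ Finset.Icc 1 (m + 1 + 1 - 1), ((b * p ^ k + k - j : ℕ) : ℤ)) *
          (p : ℤ) ^ (b * p ^ k + k - (m + 1 + 1)) := by
      rw [hiter, hform, hstep]
      have hprod : ∏ j ∈ Finset.Icc 1 (m + 1 + 1 - 1), ((b * p ^ k + k - j : ℕ) : ℤ) =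
          (∏ j ∈ Finset.Icc 1 m, ((b * p ^ k + k - j : ℕ) : ℤ)) *
            ((b * p ^ k + k - (m + 1) : ℕ) : ℤ) := by
        have : m + 1 + 1 - 1 = m + 1 := by omega
        rw [this, Finset.prod_Icc_succ_top (by omega)]
      rw [hprod]
      have he2 : b * p ^ k + k - (m + 1) - 1 = b * p ^ k + k - (m + 1 + 1) := by omega
      rw [he2]
      ring
    refine ⟨hform2, ?_⟩
    rw [hform2]
    have hC2 := coeff_props p hp a b k (m + 1 + 1 - 1) ha ha0 hb hbp hk (by omega)
    exact val_eq p hp _ hC2.1 hC2.2 _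
end

section
/- If x = a·p^{b·p^k} is a nonzero integer with p ∤ ab and 1 ≤ k ≤ p, then the sequence ord_p(D_p^i(x)) for i ≥ 0 is periodic with period dividing k; in particular ord_p(D_p^{k}(x)) = ord_p(x) = b·p^k. -/
section Aux
variable {p : ℕ}

lemma padicValInt_unit_mul_pow [Fact p.Prime] {c : ℤ} (hc0 : c ≠ 0) (hc : ¬ (p : ℤ) ∣ c)
    (m : ℕ) : padicValInt p (c * (p : ℤ) ^ m) = m := by
  have hp := (Fact.out : p.Prime)
  have hpz : ((p : ℤ) : ℤ) ≠ 0 := by exact_mod_cast hp.ne_zero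
  rw [padicValInt.mul hc0 (pow_ne_zero _ (by exact_mod_cast hp.ne_zero))]
  have h1 : padicValInt p c = 0 :=
    padicValNat.eq_zero_of_not_dvd fun h => hc (Int.natCast_dvd.mpr h)
  have h2 : padicValInt p ((p : ℤ) ^ m) = m := by
    rw [padicValInt, Int.natAbs_pow, Int.natAbs_natCast, padicValNat.prime_pow]
  omega

lemma Dp_step [Fact p.Prime] {c : ℤ} (hc0 : c ≠ 0) (hc : ¬ (p : ℤ) ∣ c)
    {m : ℕ} (hm : 1 ≤ m) :
    ∃ c' : ℤ, c' ≠ 0 ∧ ¬ (p : ℤ) ∣ c' ∧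
      Dp p (c * (p : ℤ) ^ m) = c' * (p : ℤ) ^ (m - 1 + padicValNat p m) := by
  have hp := (Fact.out : p.Prime)
  set v := padicValNat p m with hv
  set u := m / p ^ v with hu
  have hm0 : m ≠ 0 := by omega
  have hdvd : p ^ v ∣ m := pow_padicValNat_dvd
  have humul : u * p ^ v = m := Nat.div_mul_cancel hdvd
  have hu0 : u ≠ 0 := by
    intro h; rw [h, zero_mul] at humul; omega
  have hpu : ¬ p ∣ u := by
    intro ⟨w, hw⟩
    have : p ^ (v + 1) ∣ m := ⟨w, by rw [← humul, hw]; ring⟩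
    exact pow_succ_padicValNat_not_dvd hm0 this
  refine ⟨c * (u : ℤ), mul_ne_zero hc0 (by exact_mod_cast hu0), ?_, ?_⟩
  · have hpp : Prime (p : ℤ) := Nat.prime_iff_prime_int.mp hp
    intro h
    rcases hpp.dvd_mul.mp h with h | h
    · exact hc h
    · exact hpu (by exact_mod_cast h)
  · have hval : padicValInt p (c * (p : ℤ) ^ m) = m :=
      padicValInt_unit_mul_pow hc0 hc m
    have hdiv : c * (p : ℤ) ^ m / (p : ℤ) = c * (p : ℤ) ^ (m - 1) := by
      have : c * (p : ℤ) ^ m = c * (p : ℤ) ^ (m - 1) * (p : ℤ) := by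
        rw [mul_assoc, ← pow_succ]; congr 2; omega
      rw [this, Int.mul_ediv_cancel _ (by exact_mod_cast hp.ne_zero)]
    have hmz : (m : ℤ) = (u : ℤ) * (p : ℤ) ^ v := by exact_mod_cast humul.symm
    rw [Dp, hval, hdiv, hmz, pow_add]
    ring

/-- valuation profile -/
def fAux (p b k i : ℕ) : ℕ := if i % k = 0 then b * p ^ k else b * p ^ k + (k - i % k)

lemma fAux_pos {b k i : ℕ} (hb : 0 < b) (hp : 0 < p) : 1 ≤ fAux p b k i := by
  unfold fAux
  have : 1 ≤ b * p ^ k := Nat.one_le_iff_ne_zero.mpr (by positivity)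
  split <;> omega

lemma fAux_step (hp : p.Prime) {b k : ℕ} (hb : 0 < b) (hbp : ¬ p ∣ b)
    (hk1 : 1 ≤ k) (hkp : k ≤ p) (i : ℕ) :
    fAux p b k (i + 1) = fAux p b k i - 1 + padicValNat p (fAux p b k i) := by
  have : Fact p.Prime := ⟨hp⟩
  have hp1 : 1 < p := hp.one_lt
  have hbpk : 1 ≤ b * p ^ k := Nat.one_le_iff_ne_zero.mpr (by positivity)
  have hmod : (i + 1) % k = (i % k + 1) % k := (Nat.mod_add_mod i k 1).symm
  by_cases h0 : i % k = 0
  · have hval : padicValNat p (b * p ^ k) = k := by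
      rw [padicValNat.mul (by omega) (by positivity), padicValNat.eq_zero_of_not_dvd hbp,
        padicValNat.prime_pow, zero_add]
    by_cases hk : k = 1
    · subst hk
      simp only [fAux, Nat.mod_one, if_true]
      rw [hval]
      omega
    · have h1k : 1 % k = 1 := Nat.mod_eq_of_lt (by omega)
      simp only [fAux, h0, if_true, hmod, h1k]
      rw [if_neg (by omega), hval]
      omega
  · set j := i % k with hj
    have hjk : j < k := Nat.mod_lt _ (by omega)
    have hval : padicValNat p (b * p ^ k + (k - j)) = 0 := by
      apply padicValNat.eq_zero_of_not_dvd
      intro hdvd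
      have h1 : p ∣ b * p ^ k := Dvd.dvd.mul_left (dvd_pow_self p (by omega)) b
      have h2 : p ∣ k - j := by have := Nat.dvd_sub hdvd h1; simpa using this
      have : k - j < p := by omega
      have : k - j ≠ 0 := by omega
      have := Nat.le_of_dvd (by omega) h2
      omega
    by_cases hjk1 : j + 1 = k
    · simp only [fAux, if_neg h0, hmod, ← hj, hjk1, Nat.mod_self, if_true, hval]
      omega
    · have : (j + 1) % k = j + 1 := Nat.mod_eq_of_lt (by omega)
      simp only [fAux, if_neg h0, hmod, ← hj, this]
      rw [if_neg (by omega), hval]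
      omega

end Aux

theorem ord_periodic_of_small_k (p : ℕ) (hp : p.Prime) (a : ℤ) (b k : ℕ)
    (ha : ¬ (p : ℤ) ∣ a) (ha0 : a ≠ 0) (hb : 0 < b) (hbp : ¬ p ∣ b)
    (hk1 : 1 ≤ k) (hkp : k ≤ p) :
    (∀ i : ℕ, padicValInt p ((Dp p)^[i + k] (a * (p : ℤ) ^ (b * p ^ k))) =
        padicValInt p ((Dp p)^[i] (a * (p : ℤ) ^ (b * p ^ k)))) ∧
    padicValInt p ((Dp p)^[k] (a * (p : ℤ) ^ (b * p ^ k))) = b * p ^ k := by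
  have : Fact p.Prime := ⟨hp⟩
  set x := a * (p : ℤ) ^ (b * p ^ k) with hx
  have key : ∀ i : ℕ, ∃ c : ℤ, c ≠ 0 ∧ ¬ (p : ℤ) ∣ c ∧
      (Dp p)^[i] x = c * (p : ℤ) ^ (fAux p b k i) := by
    intro i
    induction i with
    | zero =>
      refine ⟨a, ha0, ha, ?_⟩
      simp [fAux, Nat.zero_mod, hx]
    | succ n ih =>
      obtain ⟨c, hc0, hc, heq⟩ := ih
      obtain ⟨c', hc'0, hc', heq'⟩ := Dp_step hc0 hc (fAux_pos hb hp.pos (i := n))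
      refine ⟨c', hc'0, hc', ?_⟩
      rw [Function.iterate_succ_apply', heq, heq', fAux_step hp hb hbp hk1 hkp]
  have hval : ∀ i : ℕ, padicValInt p ((Dp p)^[i] x) = fAux p b k i := by
    intro i
    obtain ⟨c, hc0, hc, heq⟩ := key i
    rw [heq, padicValInt_unit_mul_pow hc0 hc]
  constructor
  · intro i
    rw [hval, hval]
    unfold fAux
    rw [Nat.add_mod_right]
  · rw [hval, fAux]
    simp
end

section
/- For every integer x, the sequence ord_p(D_p^i(x)) (with the convention ord_p(0) = +∞) is eventually periodic with period at most p. -/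
/-- `ord_p` with the convention `ord_p(0) = +∞`, valued in `ℕ∞`. -/
def ordInf (p : ℕ) (x : ℤ) : ℕ∞ := if x = 0 then ⊤ else (padicValInt p x : ℕ∞)

def fstep (p k : ℕ) : ℕ := k - 1 + padicValNat p k

lemma Dp_of_val_zero {p : ℕ} {y : ℤ} (h : padicValInt p y = 0) : Dp p y = 0 := by
  simp [Dp, h]

lemma padicValInt_prime_pow {p : ℕ} (hp : p.Prime) (v : ℕ) :
    padicValInt p ((p:ℤ)^v) = v := by
  haveI := Fact.mk hp
  unfold padicValInt
  simp [Int.natAbs_pow, padicValNat.prime_pow]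

lemma exists_rep {p : ℕ} (hp : p.Prime) {y : ℤ} (hy : y ≠ 0) :
    ∃ u : ℤ, u ≠ 0 ∧ padicValInt p u = 0 ∧ y = (p:ℤ) ^ padicValInt p y * u := by
  haveI := Fact.mk hp
  obtain ⟨u, hu⟩ := (padicValInt_dvd_iff (padicValInt p y) y).2 (Or.inr le_rfl)
  have hu0 : u ≠ 0 := by rintro rfl; simp at hu; exact hy hu
  have hpow0 : ((p:ℤ) ^ padicValInt p y) ≠ 0 := by
    exact pow_ne_zero _ (by exact_mod_cast hp.pos.ne')
  have hval : padicValInt p y = padicValInt p y + padicValInt p u := by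
    conv_lhs => rw [hu]
    rw [padicValInt.mul hpow0 hu0, padicValInt_prime_pow hp]
  exact ⟨u, hu0, by omega, hu⟩

lemma Dp_val {p : ℕ} (hp : p.Prime) {y : ℤ} (hy : y ≠ 0)
    (hv : 1 ≤ padicValInt p y) :
    Dp p y ≠ 0 ∧ padicValInt p (Dp p y) = fstep p (padicValInt p y) := by
  haveI := Fact.mk hp
  set v := padicValInt p y with hvdef
  obtain ⟨u, hu0, huval, hrep⟩ := exists_rep hp hy
  have hp0 : (p:ℤ) ≠ 0 := by exact_mod_cast hp.pos.ne'
  have hpow : (p:ℤ) ^ v = p * (p:ℤ)^(v-1) := by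
    rw [← pow_succ']
    congr 1
    omega
  have hdiv : y / p = (p:ℤ)^(v-1) * u := by
    rw [hrep, hpow, mul_assoc, Int.mul_ediv_cancel_left _ hp0]
  have hDp : Dp p y = (p:ℤ)^(v-1) * u * (v:ℤ) := by
    rw [Dp, hdiv, ← hvdef]
  have hv0 : (v:ℤ) ≠ 0 := by exact_mod_cast (by omega : v ≠ 0)
  have hpow0 : ((p:ℤ)^(v-1)) ≠ 0 := pow_ne_zero _ hp0
  constructor
  · rw [hDp]; exact mul_ne_zero (mul_ne_zero hpow0 hu0) hv0
  · rw [hDp, padicValInt.mul (mul_ne_zero hpow0 hu0) hv0,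
      padicValInt.mul hpow0 hu0, padicValInt_prime_pow hp, huval,
      padicValInt.of_nat, fstep]
    omega


lemma fstep_lt {p : ℕ} (hp : p.Prime) {k n : ℕ} (hk : 1 ≤ k) (h : k < p ^ n) :
    fstep p k < p ^ n := by
  rcases Nat.eq_zero_or_pos (padicValNat p k) with h0 | h1
  · simp only [fstep, h0]; omega
  · set w := padicValNat p k with hw
    have hdvd : p ^ w ∣ k := pow_padicValNat_dvd
    have hle : p ^ w ≤ k := Nat.le_of_dvd hk hdvd
    have hwn : w < n := by
      rcases Nat.lt_or_ge w n with h' | h'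
      · exact h'
      · exact absurd ((Nat.pow_le_pow_right hp.pos h').trans hle) (by omega)
    have hdvd2 : p ^ w ∣ p ^ n - k := Nat.dvd_sub (pow_dvd_pow p hwn.le) hdvd
    have hle2 : p ^ w ≤ p ^ n - k := Nat.le_of_dvd (by omega) hdvd2
    have hwlt : w < p ^ w := Nat.lt_pow_self hp.one_lt
    show k - 1 + w < p ^ n
    omega

lemma periodic_of_eq {a : ℕ → ℕ} {p : ℕ}
    (hstep : ∀ i, a (i + 1) = fstep p (a i)) {n T : ℕ} (h : a (n + T) = a n) :
    ∀ k, n ≤ k → a (k + T) = a k := by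
  intro k hk
  induction k, hk using Nat.le_induction with
  | base => exact h
  | succ k hk ih =>
    rw [show k + 1 + T = (k + T) + 1 by ring, hstep, hstep, ih]

lemma fstep_eventually_periodic {p : ℕ} (hp : p.Prime) (a : ℕ → ℕ)
    (ha1 : ∀ i, 1 ≤ a i) (hstep : ∀ i, a (i + 1) = fstep p (a i)) :
    ∃ L, 1 ≤ L ∧ L ≤ p ∧ ∃ m, 1 ≤ m ∧ ∀ i, m ≤ i → a (i + L) = a i := by
  haveI := Fact.mk hp
  -- boundedness
  set n := a 0 + 1 with hn
  have hbound : ∀ i, a i < p ^ n := by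
    intro i
    induction i with
    | zero => calc a 0 < p ^ (a 0) := Nat.lt_pow_self hp.one_lt
        _ ≤ p ^ n := Nat.pow_le_pow_right hp.pos (by omega)
    | succ i ih => rw [hstep]; exact fstep_lt hp (ha1 i) ih
  -- pigeonhole
  obtain ⟨i, -, j, -, hij, haij⟩ :=
    Finset.exists_ne_map_eq_of_card_lt_of_maps_to
      (s := Finset.range (p ^ n + 1)) (t := Finset.range (p ^ n))
      (by simp) (fun i _ => Finset.mem_range.mpr (hbound i))
  -- wlog i < j
  obtain ⟨i0, T, hT1, hper0⟩ : ∃ i0 T, 1 ≤ T ∧ a (i0 + T) = a i0 := by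
    rcases lt_or_gt_of_ne hij with h | h
    · exact ⟨i, j - i, by omega, by rw [show i + (j - i) = j by omega]; exact haij.symm⟩
    · exact ⟨j, i - j, by omega, by rw [show j + (i - j) = i by omega]; exact haij⟩
  have hper : ∀ k, i0 ≤ k → a (k + T) = a k := periodic_of_eq hstep hper0
  -- minimum of tail values
  set V : Set ℕ := {v | ∃ k, i0 ≤ k ∧ a k = v} with hV
  set m0 := sInf V with hm0
  have hm0V : m0 ∈ V := Nat.sInf_mem ⟨a i0, i0, le_rfl, rfl⟩
  obtain ⟨k0, hk0, hak0⟩ := hm0V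
  have hmin : ∀ k, i0 ≤ k → m0 ≤ a k := fun k hk => Nat.sInf_le ⟨k, hk, rfl⟩
  have hm0pos : 1 ≤ m0 := hak0 ▸ ha1 k0
  -- preimage within tail
  have hpre : ∀ s ∈ V, ∃ c, c ∈ V ∧ fstep p c = s ∧ m0 ≤ c ∧ 1 ≤ c := by
    rintro s ⟨k, hk, rfl⟩
    have h1 : a (k + T) = a k := hper k hk
    have h2 : k + T = (k + T - 1) + 1 := by omega
    refine ⟨a (k + T - 1), ⟨k + T - 1, by omega, rfl⟩, ?_, hmin _ (by omega), ha1 _⟩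
    rw [← hstep, ← h2, h1]
  set v := padicValNat p m0 with hvdef
  have hfm0 : fstep p m0 = m0 - 1 + v := rfl
  have hvpos : 1 ≤ v := by
    rcases Nat.eq_zero_or_pos v with hv0 | h
    · exfalso
      have hmem : fstep p m0 ∈ V := ⟨k0 + 1, by omega, by rw [hstep, hak0]⟩
      have h' : m0 ≤ fstep p m0 := Nat.sInf_le hmem
      omega
    · exact h
  rcases Nat.lt_or_ge v 2 with hv1 | hv2
  · -- v = 1 : fixed point
    have key : a (k0 + 1) = a k0 := by
      rw [hstep, hak0, hfm0]; omega
    exact ⟨1, le_rfl, hp.pos, k0 + 1, by omega,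
      fun i hi => periodic_of_eq hstep (n := k0) (T := 1) key i (by omega)⟩
  · -- v ≥ 2 : cycle of length v
    have claim : ∀ j, j ≤ v - 1 →
        (m0 + j) ∈ V ∧ (1 ≤ j → padicValNat p (m0 + j) = 0) := by
      intro j
      induction j using Nat.strong_induction_on with
      | _ j ih =>
        intro hj
        rcases Nat.eq_zero_or_pos j with rfl | hj1
        · exact ⟨⟨k0, hk0, by simp [hak0]⟩, by omega⟩
        · have hprev : m0 + (j - 1) ∈ V := (ih (j - 1) (by omega) (by omega)).1
          obtain ⟨c, hcV, hfc, hcm, hc1⟩ := hpre _ hprev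
          have h1 : fstep p c = c - 1 + padicValNat p c := rfl
          rcases Nat.eq_zero_or_pos (padicValNat p c) with hw0 | hw1
          · have hcj : c = m0 + j := by omega
            exact ⟨hcj ▸ hcV, fun _ => hcj ▸ hw0⟩
          · have hcle : c ≤ m0 + (j - 1) := by omega
            rcases Nat.eq_or_lt_of_le hcm with hceq | hclt
            · exfalso
              have hpc : padicValNat p c = v := by rw [← hceq, hvdef]
              omega
            · have hj'1 : 1 ≤ c - m0 := by omega
              have h2 : padicValNat p (m0 + (c - m0)) = 0 :=
                (ih (c - m0) (by omega) (by omega)).2 hj'1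
              exfalso
              rw [show m0 + (c - m0) = c by omega] at h2
              omega
    have hvp : v ≤ p := by
      by_contra hc
      have h1 : p ∣ m0 :=
        dvd_trans (dvd_pow_self p (by omega : v ≠ 0)) pow_padicValNat_dvd
      have h2 : padicValNat p (m0 + p) = 0 := (claim p (by omega)).2 hp.pos
      have h3 : p ∣ m0 + p := Dvd.dvd.add h1 dvd_rfl
      have h4 := (padicValNat_dvd_iff (p := p) 1 (m0 + p)).1 (by rw [pow_one]; exact h3)
      omega
    have desc : ∀ t, t ≤ v - 1 → a (k0 + 1 + t) = m0 + (v - 1 - t) := by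
      intro t
      induction t with
      | zero => intro _; rw [hstep, hak0, hfm0]; omega
      | succ t iht =>
        intro ht
        rw [show k0 + 1 + (t + 1) = (k0 + 1 + t) + 1 by ring, hstep,
          iht (by omega)]
        have hval : padicValNat p (m0 + (v - 1 - t)) = 0 :=
          (claim (v - 1 - t) (by omega)).2 (by omega)
        show (m0 + (v - 1 - t)) - 1 + padicValNat p (m0 + (v - 1 - t))
            = m0 + (v - 1 - (t + 1))
        rw [hval]; omega
    have hcyc : a (k0 + v) = a k0 := by
      have hd := desc (v - 1) le_rfl
      rw [show k0 + 1 + (v - 1) = k0 + v by omega] at hd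
      rw [hd, hak0]; omega
    exact ⟨v, hvpos, hvp, k0 + 1, by omega,
      fun i hi => periodic_of_eq hstep hcyc i (by omega)⟩


theorem ord_seq_eventually_periodic (p : ℕ) (hp : p.Prime) (x : ℤ) :
    ∃ L : ℕ, 1 ≤ L ∧ L ≤ p ∧ ∃ m : ℕ, 1 ≤ m ∧
      ∀ i, m ≤ i → ordInf p ((Dp p)^[i + L] x) = ordInf p ((Dp p)^[i] x) := by
  set y : ℕ → ℤ := fun i => (Dp p)^[i] x with hy
  have hstep0 : ∀ i, y (i + 1) = Dp p (y i) := fun i =>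
    Function.iterate_succ_apply' (Dp p) i x
  by_cases hzero : ∃ i, y i = 0
  · obtain ⟨i, hi⟩ := hzero
    have hall : ∀ j, i ≤ j → y j = 0 := by
      intro j hj
      induction j, hj using Nat.le_induction with
      | base => exact hi
      | succ j hj ih => rw [hstep0, ih, Dp_zero]
    refine ⟨1, le_rfl, hp.pos, i + 1, by omega, fun j hj => ?_⟩
    show ordInf p (y (j + 1)) = ordInf p (y j)
    rw [hall (j + 1) (by omega), hall j (by omega)]
  · push_neg at hzero
    have hvpos : ∀ i, 1 ≤ padicValInt p (y i) := by
      intro i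
      rcases Nat.eq_zero_or_pos (padicValInt p (y i)) with h0 | h1
      · exact absurd (by rw [hstep0, Dp_of_val_zero h0]) (hzero (i + 1))
      · exact h1
    have hstep : ∀ i, padicValInt p (y (i + 1)) = fstep p (padicValInt p (y i)) := by
      intro i
      rw [hstep0]
      exact (Dp_val hp (hzero i) (hvpos i)).2
    obtain ⟨L, hL1, hLp, m, hm1, hper⟩ :=
      fstep_eventually_periodic hp (fun i => padicValInt p (y i)) hvpos hstep
    refine ⟨L, hL1, hLp, m, hm1, fun i hi => ?_⟩
    show ordInf p (y (i + L)) = ordInf p (y i)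
    rw [ordInf, ordInf, if_neg (hzero (i + L)), if_neg (hzero i)]
    exact_mod_cast congrArg (fun t : ℕ => (t : ℕ∞)) (hper i hi)
end

section
/- For every integer N ≥ 1 there exists an integer x such that ord_p(x) < ord_p(D_p(x)) < ord_p(D_p^2(x)) < ⋯ < ord_p(D_p^N(x)), with all these values finite. -/
/-- A tower of exponents: `tower p 0 = 2`, `tower p (k+1) = p ^ tower p k + 1`. -/
def tower (p : ℕ) : ℕ → ℕ
  | 0 => 2
  | k + 1 => p ^ tower p k + 1

/-- The sequence of valuations of the iterates. -/
def Aseq (p a0 : ℕ) : ℕ → ℕ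
  | 0 => a0
  | i + 1 => Aseq p a0 i - 1 + padicValNat p (Aseq p a0 i)

lemma tower_ge_two (p : ℕ) (hp : 1 ≤ p) : ∀ k, 2 ≤ tower p k
  | 0 => le_refl 2
  | k + 1 => by
      have : 1 ≤ p ^ tower p k := Nat.one_le_pow _ _ hp
      simp only [tower]; omega

lemma padicValNat_pow_mul (p : ℕ) (hp : p.Prime) (t m : ℕ) :
    padicValNat p (p ^ t * (1 + p * m)) = t := by
  haveI : Fact p.Prime := ⟨hp⟩
  have hnd : ¬ p ∣ (1 + p * m) := by
    intro h
    have h1 : p ∣ 1 := by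
      have := Nat.dvd_sub h (Dvd.intro m rfl)
      simpa using this
    have h3 := Nat.dvd_one.mp h1
    have := hp.one_lt
    omega
  have h1 : (p : ℕ) ^ t ≠ 0 := pow_ne_zero _ hp.ne_zero
  have h2 : 1 + p * m ≠ 0 := by omega
  rw [padicValNat.mul h1 h2, padicValNat.prime_pow, padicValNat.eq_zero_of_not_dvd hnd]
  omega

/-- Key structural lemma: each valuation in the sequence is `p^t * (unit mod p)`. -/
lemma Aseq_form (p N : ℕ) (hp : p.Prime) :
    ∀ i, i ≤ N → ∃ m, Aseq p (p ^ tower p N) i = p ^ tower p (N - i) * (1 + p * m) := by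
  intro i
  induction i with
  | zero => intro _; exact ⟨0, by simp [Aseq]⟩
  | succ i ih =>
      intro hi
      obtain ⟨m, hm⟩ := ih (by omega)
      obtain ⟨k, hNi, hk⟩ : ∃ k, N - i = k + 1 ∧ N - (i + 1) = k :=
        ⟨N - (i + 1), by omega, rfl⟩
      rw [hNi] at hm
      rw [hk]
      have hval : padicValNat p (Aseq p (p ^ tower p N) i) = tower p (k + 1) := by
        rw [hm, padicValNat_pow_mul p hp]
      have htk : tower p (k + 1) = p ^ tower p k + 1 := rfl
      have hBpos : 1 ≤ p ^ tower p (k + 1) * (1 + p * m) :=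
        Nat.one_le_iff_ne_zero.mpr (Nat.mul_ne_zero (pow_ne_zero _ hp.ne_zero) (by omega))
      have hA : Aseq p (p ^ tower p N) (i + 1)
          = p ^ tower p (k + 1) * (1 + p * m) + p ^ tower p k := by
        show Aseq p (p ^ tower p N) i - 1 + padicValNat p (Aseq p (p ^ tower p N) i) = _
        rw [hval, hm]
        omega
      have hle : tower p k + 1 ≤ tower p (k + 1) := by
        have := Nat.lt_pow_self (n := tower p k) hp.one_lt
        omega
      obtain ⟨δ, hδ⟩ : ∃ δ, tower p (k + 1) = tower p k + 1 + δ := ⟨tower p (k + 1) - tower p k - 1, by omega⟩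
      refine ⟨p ^ δ * (1 + p * m), ?_⟩
      rw [hA, hδ]
      ring

lemma step_lemma (p : ℕ) (hp : p.Prime) (x : ℤ) (hx : x ≠ 0)
    (hv : 1 ≤ padicValInt p x) :
    Dp p x ≠ 0 ∧
      padicValInt p (Dp p x) = padicValInt p x - 1 + padicValNat p (padicValInt p x) := by
  haveI : Fact p.Prime := ⟨hp⟩
  have hdvd : (p : ℤ) ∣ x := by
    have := (padicValInt_dvd_iff (p := p) 1 x).mpr (Or.inr hv)
    simpa using this
  have hxp : x / p * p = x := Int.ediv_mul_cancel hdvd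
  have hq : x / p ≠ 0 := by
    intro h
    rw [h, zero_mul] at hxp
    exact hx hxp.symm
  have hvq : padicValInt p (x / p) = padicValInt p x - 1 := by
    have := padicValInt_mul_eq_succ (p := p) (x / p) hq
    rw [hxp] at this
    omega
  have hvne : (padicValInt p x : ℤ) ≠ 0 := by
    exact_mod_cast Nat.one_le_iff_ne_zero.mp hv
  constructor
  · exact mul_ne_zero hq hvne
  · rw [Dp, padicValInt.mul hq hvne, hvq, padicValInt.of_nat]

theorem arbitrarily_many_jumps (p : ℕ) (hp : p.Prime) (N : ℕ) (hN : 1 ≤ N) :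
    ∃ x : ℤ, (∀ i, i ≤ N → (Dp p)^[i] x ≠ 0) ∧
      ∀ i, i < N → padicValInt p ((Dp p)^[i] x) < padicValInt p ((Dp p)^[i + 1] x) := by
  haveI : Fact p.Prime := ⟨hp⟩
  set a0 := p ^ tower p (N - 1) with ha0
  refine ⟨(p : ℤ) ^ a0, ?_⟩
  have key : ∀ i, i ≤ N → (Dp p)^[i] ((p : ℤ) ^ a0) ≠ 0 ∧
      padicValInt p ((Dp p)^[i] ((p : ℤ) ^ a0)) = Aseq p a0 i := by
    intro i
    induction i with
    | zero =>
        intro _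
        constructor
        · exact pow_ne_zero _ (Int.natCast_ne_zero.mpr hp.ne_zero)
        · show padicValInt p ((p : ℤ) ^ a0) = a0
          rw [show ((p : ℤ) ^ a0) = ((p ^ a0 : ℕ) : ℤ) by push_cast; ring,
            padicValInt.of_nat, padicValNat.prime_pow]
    | succ i ih =>
        intro hi
        obtain ⟨hne, hval⟩ := ih (by omega)
        obtain ⟨m, hm⟩ := Aseq_form p (N - 1) hp i (by omega)
        have hv1 : 1 ≤ padicValInt p ((Dp p)^[i] ((p : ℤ) ^ a0)) := by
          rw [hval, ha0, hm]
          exact Nat.one_le_iff_ne_zero.mpr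
            (Nat.mul_ne_zero (pow_ne_zero _ hp.ne_zero) (by omega))
        obtain ⟨h1, h2⟩ := step_lemma p hp _ hne hv1
        rw [Function.iterate_succ_apply']
        exact ⟨h1, by rw [h2, hval]; rfl⟩
  constructor
  · intro i hi; exact (key i hi).1
  · intro i hi
    rw [(key i (by omega)).2, (key (i + 1) (by omega)).2]
    obtain ⟨m, hm⟩ := Aseq_form p (N - 1) hp i (by omega)
    have hvA : padicValNat p (Aseq p a0 i) = tower p (N - 1 - i) := by
      rw [ha0, hm]; exact padicValNat_pow_mul p hp _ _
    have h2 : 2 ≤ tower p (N - 1 - i) := tower_ge_two p hp.one_lt.le _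
    have hpos : 1 ≤ Aseq p a0 i := by
      rw [ha0, hm]
      exact Nat.one_le_iff_ne_zero.mpr
        (Nat.mul_ne_zero (pow_ne_zero _ hp.ne_zero) (by omega))
    show Aseq p a0 i < Aseq p a0 i - 1 + padicValNat p (Aseq p a0 i)
    omega
end

section
/- If a_0 is an integer with p ∤ a_0, then there is no integer x with D_p(x) = a_0·p^{p−1}; that is, a_0·p^{p−1} has no integral anti-partial derivative. -/
theorem no_antiderivative (p : ℕ) (hp : p.Prime) (a₀ : ℤ) (ha : ¬ (p : ℤ) ∣ a₀) :
    ¬ ∃ x : ℤ, Dp p x = a₀ * (p : ℤ) ^ (p - 1) := by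
  haveI : Fact p.Prime := ⟨hp⟩
  rintro ⟨x, hx⟩
  have hpz : (p : ℤ) ≠ 0 := Int.natCast_ne_zero.mpr hp.ne_zero
  have ha0 : a₀ ≠ 0 := fun h => ha (h ▸ dvd_zero _)
  have hrhs : a₀ * (p : ℤ) ^ (p - 1) ≠ 0 := mul_ne_zero ha0 (pow_ne_zero _ hpz)
  rw [Dp] at hx
  set k := padicValInt p x with hk
  have hk0 : k ≠ 0 := by
    intro h
    exact hrhs (by rw [← hx, h]; simp)
  have hq0 : x / (p : ℤ) ≠ 0 := by
    intro h
    exact hrhs (by rw [← hx, h]; simp)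
  have hx0 : x ≠ 0 := by
    intro h
    exact hk0 (by simp [hk, h, padicValInt.zero])
  have hpx : (p : ℤ) ∣ x := by
    have := (padicValInt_dvd_iff (p := p) 1 x).mpr (Or.inr (by omega))
    simpa using this
  have hxe : (p : ℤ) * (x / p) = x := Int.mul_ediv_cancel' hpx
  have hkq : k = 1 + padicValInt p (x / p) := by
    conv_lhs => rw [hk, ← hxe]
    rw [padicValInt.mul hpz hq0]
    simp [padicValInt.self hp.one_lt]
  -- valuation of both sides of hx
  have hkz : ((k : ℤ)) ≠ 0 := Int.natCast_ne_zero.mpr hk0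
  have hval : padicValInt p ((x / p) * (k : ℤ)) = padicValInt p (a₀ * (p : ℤ) ^ (p - 1)) := by
    rw [hx]
  rw [padicValInt.mul hq0 hkz, padicValInt.mul ha0 (pow_ne_zero _ hpz)] at hval
  have h1 : padicValInt p ((k : ℤ)) = padicValNat p k := padicValInt.of_nat
  have h2 : padicValInt p a₀ = 0 := padicValInt.eq_zero_of_not_dvd ha
  have h3 : padicValInt p ((p : ℤ) ^ (p - 1)) = p - 1 := by
    rw [show ((p : ℤ) ^ (p - 1)) = ((p ^ (p - 1) : ℕ) : ℤ) by push_cast; ring,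
      padicValInt.of_nat, padicValNat.prime_pow]
  rw [h1, h2, h3] at hval
  set m := padicValNat p k with hm
  have hsum : k + m = p := by
    have hp2 := hp.two_le
    omega
  have hdvd : p ^ m ∣ k := pow_padicValNat_dvd
  have hle : p ^ m ≤ k := Nat.le_of_dvd (Nat.pos_of_ne_zero hk0) hdvd
  have hm0 : m = 0 := by
    by_contra hmne
    have : p ≤ p ^ m := Nat.le_self_pow hmne p
    omega
  have hkp : k = p := by omega
  have hone : padicValNat p p = 1 := padicValNat.self hp.one_lt
  rw [hm, hkp, hone] at hm0
  exact one_ne_zero hm0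
end

section
/- For every nonzero integer y, the set {x ∈ ℤ : D_p(x) = y} is finite. -/
theorem finitely_many_antiderivatives (p : ℕ) (hp : p.Prime) (y : ℤ) (hy : y ≠ 0) :
    {x : ℤ | Dp p x = y}.Finite := by
  apply Set.Finite.subset (Set.finite_Icc (-((p:ℤ)*|y|+p)) ((p:ℤ)*|y|+p))
  intro x hx
  simp only [Set.mem_setOf_eq, Dp] at hx
  have hp0 : (0:ℤ) < p := by exact_mod_cast hp.pos
  set v : ℤ := (padicValInt p x : ℤ) with hvdef
  have hv0 : 0 ≤ v := Int.ofNat_nonneg _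
  have hv1 : 1 ≤ v := by
    rcases lt_or_ge v 1 with h | h
    · exfalso; apply hy
      have : v = 0 := le_antisymm (by omega) hv0
      rw [← hx, this, mul_zero]
    · exact h
  have habs : |x / p| ≤ |y| := by
    calc |x / p| = |x / p| * 1 := (mul_one _).symm
    _ ≤ |x / p| * v := by
        exact mul_le_mul_of_nonneg_left hv1 (abs_nonneg _)
    _ = |x / p| * |v| := by rw [abs_of_nonneg hv0]
    _ = |x / p * v| := (abs_mul _ _).symm
    _ = |y| := by rw [hx]
  have hdm : (p:ℤ) * (x / p) + x % p = x := Int.mul_ediv_add_emod x p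
  have hr0 : 0 ≤ x % p := Int.emod_nonneg x (by positivity)
  have hr1 : x % p < p := Int.emod_lt_of_pos x hp0
  have hq1 : x / p ≤ |y| := le_trans (le_abs_self _) habs
  have hq2 : -|y| ≤ x / p := by
    have := neg_abs_le (x / p); omega
  constructor
  · have : (p:ℤ) * (-|y|) ≤ p * (x / p) := by
      exact mul_le_mul_of_nonneg_left hq2 (le_of_lt hp0)
    nlinarith
  · have : (p:ℤ) * (x / p) ≤ p * |y| := by
      exact mul_le_mul_of_nonneg_left hq1 (le_of_lt hp0)
    nlinarith
end

section
/- Let x_1 = a_1·p^{b_1·p^{k_1}} and x_2 = a_2·p^{b_2·p^{k_2}} be nonzero integers in standard form (p ∤ a_1 b_1, p ∤ a_2 b_2, b_1, b_2 > 0, k_1, k_2 ≥ 0) with D_p(x_1) = D_p(x_2). Then the following are equivalent: (i) k_1 < k_2; (ii) b_1·p^{k_1} > b_2·p^{k_2}; (iii) b_1 > b_2. -/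
lemma val_mul_pow {p : ℕ} (hp : p.Prime) (a : ℤ) (n : ℕ)
    (ha0 : a ≠ 0) (ha : ¬ (p : ℤ) ∣ a) : padicValInt p (a * (p : ℤ) ^ n) = n := by
  haveI : Fact p.Prime := ⟨hp⟩
  have hpne : ((p : ℤ)) ^ n ≠ 0 := pow_ne_zero _ (by exact_mod_cast hp.ne_zero)
  rw [padicValInt.mul ha0 hpne, padicValInt.eq_zero_of_not_dvd ha]
  have : ((p : ℤ)) ^ n = ((p ^ n : ℕ) : ℤ) := by push_cast; ring
  rw [this, padicValInt.of_nat, padicValNat.prime_pow]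
  simp

lemma val_aux {p : ℕ} (hp : p.Prime) (a : ℤ) (m b k : ℕ)
    (ha0 : a ≠ 0) (ha : ¬ (p : ℤ) ∣ a) (hb : 0 < b) (hbp : ¬ p ∣ b) :
    padicValInt p (a * (p : ℤ) ^ m * ((b : ℤ) * (p : ℤ) ^ k)) = m + k := by
  have heq : a * (p : ℤ) ^ m * ((b : ℤ) * (p : ℤ) ^ k) = (a * (b : ℤ)) * (p : ℤ) ^ (m + k) := by
    ring
  rw [heq, val_mul_pow hp _ _ (mul_ne_zero ha0 (by exact_mod_cast hb.ne'))]
  intro h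
  rcases (Int.Prime.dvd_mul' hp h) with h | h
  · exact ha h
  · exact hbp (by exact_mod_cast h)

lemma Dp_form {p : ℕ} (hp : p.Prime) (a : ℤ) (m : ℕ)
    (ha0 : a ≠ 0) (ha : ¬ (p : ℤ) ∣ a) :
    Dp p (a * (p : ℤ) ^ (m + 1)) = a * (p : ℤ) ^ m * (m + 1) := by
  have hp0 : (p : ℤ) ≠ 0 := by exact_mod_cast hp.ne_zero
  have hdiv : (a * (p : ℤ) ^ (m + 1)) / p = a * (p : ℤ) ^ m := by
    rw [pow_succ, ← mul_assoc, Int.mul_ediv_cancel _ hp0]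
  rw [Dp, hdiv, val_mul_pow hp a (m + 1) ha0 ha]
  push_cast; ring

theorem tfae_k_b (p : ℕ) (hp : p.Prime)
    (a₁ a₂ : ℤ) (b₁ b₂ k₁ k₂ : ℕ)
    (ha₁0 : a₁ ≠ 0) (ha₁ : ¬ (p : ℤ) ∣ a₁) (hb₁ : 0 < b₁) (hb₁p : ¬ p ∣ b₁)
    (ha₂0 : a₂ ≠ 0) (ha₂ : ¬ (p : ℤ) ∣ a₂) (hb₂ : 0 < b₂) (hb₂p : ¬ p ∣ b₂)
    (hD : Dp p (a₁ * (p : ℤ) ^ (b₁ * p ^ k₁)) = Dp p (a₂ * (p : ℤ) ^ (b₂ * p ^ k₂))) :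
    (k₁ < k₂ ↔ b₂ * p ^ k₂ < b₁ * p ^ k₁) ∧ (k₁ < k₂ ↔ b₂ < b₁) := by
  have hppos : 0 < p := hp.pos
  set n₁ := b₁ * p ^ k₁ with hn₁
  set n₂ := b₂ * p ^ k₂ with hn₂
  have hn₁pos : 0 < n₁ := Nat.mul_pos hb₁ (Nat.pow_pos hppos)
  have hn₂pos : 0 < n₂ := Nat.mul_pos hb₂ (Nat.pow_pos hppos)
  obtain ⟨m₁, hm₁⟩ : ∃ m, n₁ = m + 1 := ⟨n₁ - 1, by omega⟩
  obtain ⟨m₂, hm₂⟩ : ∃ m, n₂ = m + 1 := ⟨n₂ - 1, by omega⟩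
  rw [hm₁, hm₂, Dp_form hp a₁ m₁ ha₁0 ha₁, Dp_form hp a₂ m₂ ha₂0 ha₂] at hD
  have hc₁ : ((m₁ : ℤ) + 1) = (b₁ : ℤ) * (p : ℤ) ^ k₁ := by
    have := hm₁.symm; rw [hn₁] at this; exact_mod_cast this
  have hc₂ : ((m₂ : ℤ) + 1) = (b₂ : ℤ) * (p : ℤ) ^ k₂ := by
    have := hm₂.symm; rw [hn₂] at this; exact_mod_cast this
  rw [hc₁, hc₂] at hD
  have hval := congrArg (padicValInt p) hD
  rw [val_aux hp a₁ m₁ b₁ k₁ ha₁0 ha₁ hb₁ hb₁p,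
      val_aux hp a₂ m₂ b₂ k₂ ha₂0 ha₂ hb₂ hb₂p] at hval
  -- so n₁ + k₁ = n₂ + k₂
  have key : n₁ + k₁ = n₂ + k₂ := by omega
  refine ⟨⟨fun h => by omega, fun h => by omega⟩, ?_, ?_⟩
  · intro h
    have hlt : n₂ < n₁ := by omega
    have h1 : b₂ * p ^ k₁ ≤ b₂ * p ^ k₂ :=
      Nat.mul_le_mul_left _ (Nat.pow_le_pow_right hppos h.le)
    have h2 : b₂ * p ^ k₁ < b₁ * p ^ k₁ := lt_of_le_of_lt h1 hlt
    exact Nat.lt_of_mul_lt_mul_right h2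
  · intro h
    by_contra hk
    push_neg at hk
    have h1 : b₂ * p ^ k₂ < b₁ * p ^ k₂ :=
      (Nat.mul_lt_mul_right (Nat.pow_pos hppos)).mpr h
    have h2 : n₂ < n₁ := lt_of_lt_of_le h1
      (Nat.mul_le_mul_left _ (Nat.pow_le_pow_right hppos hk))
    omega
end

section
/- Let x_1 = a_1·p^{b_1·p^{k_1}} and x_2 = a_2·p^{b_2·p^{k_2}} be in standard form with D_p(x_1) = D_p(x_2) > 0. Then k_1 < k_2 if and only if x_1 < x_2, and also if and only if a_1 < a_2. -/
lemma padicValInt_std (p : ℕ) (hp : p.Prime) (a : ℤ) (m : ℕ)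
    (ha0 : a ≠ 0) (ha : ¬ (p : ℤ) ∣ a) :
    padicValInt p (a * (p : ℤ) ^ m) = m := by
  haveI := Fact.mk hp
  rw [padicValInt.mul ha0 (pow_ne_zero _ (by exact_mod_cast hp.ne_zero)),
    padicValInt.eq_zero_of_not_dvd ha]
  have : ((p : ℤ) ^ m) = ((p ^ m : ℕ) : ℤ) := by push_cast; ring
  rw [this, padicValInt.of_nat, padicValNat.prime_pow]
  omega

lemma Dp_std (p : ℕ) (hp : p.Prime) (a : ℤ) (m : ℕ)
    (ha0 : a ≠ 0) (ha : ¬ (p : ℤ) ∣ a) (hm : 0 < m) :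
    Dp p (a * (p : ℤ) ^ m) = a * (p : ℤ) ^ (m - 1) * m := by
  have hdiv : (a * (p : ℤ) ^ m) / p = a * (p : ℤ) ^ (m - 1) := by
    conv_lhs => rw [show m = (m - 1) + 1 from (Nat.succ_pred_eq_of_pos hm).symm]
    rw [pow_succ, ← mul_assoc]
    exact Int.mul_ediv_cancel _ (by exact_mod_cast hp.ne_zero)
  rw [Dp, hdiv, padicValInt_std p hp a m ha0 ha]

lemma aux_lt (x₁ x₂ m₁ m₂ : ℤ) (hx₁ : 0 < x₁) (hx₂ : 0 < x₂) (hm₁ : 0 < m₁)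
    (hm₂ : 0 < m₂) (h : x₁ * m₁ = x₂ * m₂) : x₁ < x₂ ↔ m₂ < m₁ := by
  constructor <;> intro h' <;> nlinarith

lemma b_lt (p b₁ b₂ k₁ k₂ : ℕ) (hp : 2 ≤ p)
    (hsum : b₁ * p ^ k₁ + k₁ = b₂ * p ^ k₂ + k₂)
    (hm : b₂ * p ^ k₂ < b₁ * p ^ k₁) : b₂ < b₁ := by
  have hk : k₁ < k₂ := by omega
  have h1 : b₂ * p ^ k₁ ≤ b₂ * p ^ k₂ :=
    Nat.mul_le_mul_left _ (Nat.pow_le_pow_right (by omega) hk.le)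
  have : b₂ * p ^ k₁ < b₁ * p ^ k₁ := lt_of_le_of_lt h1 hm
  exact Nat.lt_of_mul_lt_mul_right this

theorem tfae_k_x_a (p : ℕ) (hp : p.Prime)
    (a₁ a₂ : ℤ) (b₁ b₂ k₁ k₂ : ℕ)
    (ha₁0 : a₁ ≠ 0) (ha₁ : ¬ (p : ℤ) ∣ a₁) (hb₁ : 0 < b₁) (hb₁p : ¬ p ∣ b₁)
    (ha₂0 : a₂ ≠ 0) (ha₂ : ¬ (p : ℤ) ∣ a₂) (hb₂ : 0 < b₂) (hb₂p : ¬ p ∣ b₂)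
    (hD : Dp p (a₁ * (p : ℤ) ^ (b₁ * p ^ k₁)) = Dp p (a₂ * (p : ℤ) ^ (b₂ * p ^ k₂)))
    (hpos : 0 < Dp p (a₁ * (p : ℤ) ^ (b₁ * p ^ k₁))) :
    (k₁ < k₂ ↔ a₁ * (p : ℤ) ^ (b₁ * p ^ k₁) < a₂ * (p : ℤ) ^ (b₂ * p ^ k₂)) ∧
    (k₁ < k₂ ↔ a₁ < a₂) := by
  have hp0 : (0 : ℤ) < p := by exact_mod_cast hp.pos
  set m₁ := b₁ * p ^ k₁ with hm₁def
  set m₂ := b₂ * p ^ k₂ with hm₂def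
  have hm₁ : 0 < m₁ := Nat.mul_pos hb₁ (Nat.pow_pos hp.pos)
  have hm₂ : 0 < m₂ := Nat.mul_pos hb₂ (Nat.pow_pos hp.pos)
  have hD₁ : Dp p (a₁ * (p : ℤ) ^ m₁) = (a₁ * b₁) * (p : ℤ) ^ (m₁ - 1 + k₁) := by
    rw [Dp_std p hp a₁ m₁ ha₁0 ha₁ hm₁, hm₁def]
    push_cast
    ring
  have hD₂ : Dp p (a₂ * (p : ℤ) ^ m₂) = (a₂ * b₂) * (p : ℤ) ^ (m₂ - 1 + k₂) := by
    rw [Dp_std p hp a₂ m₂ ha₂0 ha₂ hm₂, hm₂def]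
    push_cast
    ring
  have hab₁ : ¬ (p : ℤ) ∣ a₁ * b₁ := by
    rw [(Nat.prime_iff_prime_int.mp hp).dvd_mul]
    push_neg
    exact ⟨ha₁, by exact_mod_cast fun h => hb₁p (Int.natCast_dvd_natCast.mp (by exact_mod_cast h))⟩
  have hab₂ : ¬ (p : ℤ) ∣ a₂ * b₂ := by
    rw [(Nat.prime_iff_prime_int.mp hp).dvd_mul]
    push_neg
    exact ⟨ha₂, by exact_mod_cast fun h => hb₂p (Int.natCast_dvd_natCast.mp (by exact_mod_cast h))⟩
  have hab₁0 : a₁ * (b₁ : ℤ) ≠ 0 := fun h => hab₁ (h ▸ dvd_zero _)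
  have hab₂0 : a₂ * (b₂ : ℤ) ≠ 0 := fun h => hab₂ (h ▸ dvd_zero _)
  rw [hD₁, hD₂] at hD
  -- valuations equal
  have hval : m₁ - 1 + k₁ = m₂ - 1 + k₂ := by
    have := congrArg (padicValInt p) hD
    rwa [padicValInt_std p hp _ _ hab₁0 hab₁, padicValInt_std p hp _ _ hab₂0 hab₂] at this
  have hsum : m₁ + k₁ = m₂ + k₂ := by omega
  -- a₁b₁ = a₂b₂
  have habeq : a₁ * (b₁ : ℤ) = a₂ * (b₂ : ℤ) := by
    rw [hval] at hD
    exact mul_right_cancel₀ (pow_ne_zero _ hp0.ne') hD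
  -- positivity of a₁, a₂
  have hposab : 0 < a₁ * (b₁ : ℤ) := by
    rw [hD₁] at hpos
    rcases mul_pos_iff.mp hpos with ⟨h, _⟩ | ⟨_, h⟩
    · exact h
    · linarith [pow_pos hp0 (m₁ - 1 + k₁)]
  have ha₁pos : 0 < a₁ := by
    rcases mul_pos_iff.mp hposab with ⟨h, _⟩ | ⟨_, h⟩
    · exact h
    · exact absurd h (Int.natCast_nonneg b₁ : (0:ℤ) ≤ b₁).not_gt
  have ha₂pos : 0 < a₂ := by
    have hposab2 : 0 < a₂ * (b₂ : ℤ) := habeq ▸ hposab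
    rcases mul_pos_iff.mp hposab2 with ⟨h, _⟩ | ⟨_, h⟩
    · exact h
    · exact absurd h (Int.natCast_nonneg b₂ : (0:ℤ) ≤ b₂).not_gt
  have hx₁pos : 0 < a₁ * (p : ℤ) ^ m₁ := by positivity
  have hx₂pos : 0 < a₂ * (p : ℤ) ^ m₂ := by positivity
  -- x₁ * m₁ = x₂ * m₂
  have hxm : (a₁ * (p : ℤ) ^ m₁) * m₁ = (a₂ * (p : ℤ) ^ m₂) * m₂ := by
    have e1 : (a₁ * (p : ℤ) ^ m₁) * m₁ = (a₁ * b₁) * (p : ℤ) ^ (m₁ + k₁) := by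
      rw [hm₁def]; push_cast; ring
    have e2 : (a₂ * (p : ℤ) ^ m₂) * m₂ = (a₂ * b₂) * (p : ℤ) ^ (m₂ + k₂) := by
      rw [hm₂def]; push_cast; ring
    rw [e1, e2, habeq, hsum]
  have key_x : a₁ * (p : ℤ) ^ m₁ < a₂ * (p : ℤ) ^ m₂ ↔ m₂ < m₁ := by
    have := aux_lt (a₁ * (p : ℤ) ^ m₁) (a₂ * (p : ℤ) ^ m₂) m₁ m₂ hx₁pos hx₂pos
      (by exact_mod_cast hm₁) (by exact_mod_cast hm₂) hxm
    rw [this]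
    exact_mod_cast Iff.rfl
  have key_a : a₁ < a₂ ↔ (b₂ : ℤ) < b₁ := by
    exact aux_lt a₁ a₂ b₁ b₂ ha₁pos ha₂pos (by exact_mod_cast hb₁) (by exact_mod_cast hb₂) habeq
  have hk_m : k₁ < k₂ ↔ m₂ < m₁ := by omega
  have hm_b : m₂ < m₁ ↔ b₂ < b₁ := by
    constructor
    · exact b_lt p b₁ b₂ k₁ k₂ hp.two_le hsum
    · intro h
      rcases lt_trichotomy m₂ m₁ with h' | h' | h'
      · exact h'
      · have hkk : k₁ = k₂ := by omega
        rw [hm₁def, hm₂def, hkk] at h'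
        have hbb : b₂ = b₁ := Nat.eq_of_mul_eq_mul_right (Nat.pow_pos hp.pos) h'
        omega
      · have := b_lt p b₂ b₁ k₂ k₁ hp.two_le hsum.symm h'
        omega
  constructor
  · rw [hk_m, key_x]
  · rw [hk_m, hm_b, key_a]
    exact_mod_cast Iff.rfl
end

section
/- For any prime p, D_p(p^{p^{p+1}+p}) = D_p((p^p + 1)·p^{p^{p+1}}); thus anti-partial derivatives are not unique. -/
theorem antiderivative_not_unique (p : ℕ) (hp : p.Prime) :
    Dp p ((p : ℤ) ^ (p ^ (p + 1) + p)) = Dp p (((p : ℤ) ^ p + 1) * (p : ℤ) ^ (p ^ (p + 1))) := by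
  haveI : Fact p.Prime := ⟨hp⟩
  have hp0 : (p : ℤ) ≠ 0 := by exact_mod_cast hp.ne_zero
  set N := p ^ (p + 1) with hN
  obtain ⟨k, hk⟩ : ∃ k, N = k + 1 :=
    ⟨N - 1, by have : 1 ≤ N := Nat.one_le_pow _ _ hp.pos; omega⟩
  -- unit part is not divisible by p
  have hu : ¬ p ∣ (p ^ p + 1) := by
    intro h
    have h1 : p ∣ 1 := (Nat.dvd_add_right (dvd_pow_self _ hp.pos.ne')).mp h
    have h2 := Nat.eq_one_of_dvd_one h1
    have h3 := hp.one_lt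
    omega
  -- valuations
  have hv1 : padicValInt p ((p : ℤ) ^ (N + p)) = N + p := by
    rw [padicValInt, Int.natAbs_pow, Int.natAbs_natCast, padicValNat.prime_pow]
  have hcast : ((p : ℤ) ^ p + 1) = ((p ^ p + 1 : ℕ) : ℤ) := by push_cast; ring
  have hv2 : padicValInt p (((p : ℤ) ^ p + 1) * (p : ℤ) ^ N) = N := by
    have h1 : ((p : ℤ) ^ p + 1) ≠ 0 := by positivity
    have h2 : (p : ℤ) ^ N ≠ 0 := pow_ne_zero _ hp0
    rw [padicValInt.mul h1 h2, hcast, padicValInt.of_nat,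
      padicValNat.eq_zero_of_not_dvd hu, zero_add]
    rw [padicValInt, Int.natAbs_pow, Int.natAbs_natCast, padicValNat.prime_pow]
  -- divisions
  have hd1 : (p : ℤ) ^ (N + p) / p = (p : ℤ) ^ (k + p) := by
    rw [hk, show k + 1 + p = (k + p) + 1 by ring, pow_succ, Int.mul_ediv_cancel _ hp0]
  have hd2 : ((p : ℤ) ^ p + 1) * (p : ℤ) ^ N / p = ((p : ℤ) ^ p + 1) * (p : ℤ) ^ k := by
    rw [hk, pow_succ, ← mul_assoc, Int.mul_ediv_cancel _ hp0]
  rw [Dp, Dp, hv1, hv2, hd1, hd2]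
  have key : (p : ℤ) ^ p * ((N : ℤ) + p) = ((p : ℤ) ^ p + 1) * N := by
    have : ((N : ℤ)) = (p : ℤ) ^ (p + 1) := by rw [hN]; push_cast; ring
    rw [this]; ring
  push_cast
  calc (p : ℤ) ^ (k + p) * ((N : ℤ) + p)
      = (p : ℤ) ^ k * ((p : ℤ) ^ p * ((N : ℤ) + p)) := by rw [pow_add]; ring
    _ = (p : ℤ) ^ k * (((p : ℤ) ^ p + 1) * N) := by rw [key]
    _ = ((p : ℤ) ^ p + 1) * (p : ℤ) ^ k * N := by ring
end

section
/- For every positive integer n, there exist infinitely many integers x_0 such that the set {x ∈ ℤ : D_p(x) = D_p(x_0)} has exactly n elements. -/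
namespace DpAux

/-- the chain step -/
def cf (p x : ℕ) : ℕ := x + p ^ x

/-- the chain: `jf p s i = cf^[i] (p^s)` -/
def jf (p s i : ℕ) : ℕ := (cf p)^[i] (p ^ s)

/-- unit parts -/
def tf (p s n i : ℕ) : ℕ := ∑ l ∈ Finset.Ico i n, p ^ (jf p s l - jf p s i)

def wf (p s n : ℕ) : ℕ := ∏ i ∈ Finset.range n, tf p s n i

def Wf (p s n i : ℕ) : ℕ := ∏ l ∈ (Finset.range n).erase i, tf p s n l

/-- the target value -/
def vf (p s n : ℕ) : ℕ := p ^ (jf p s n - 1) * wf p s n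

/-- the fiber elements -/
def xf (p s n i : ℕ) : ℕ := p ^ (jf p s n - jf p s i) * Wf p s n i

variable {p s n : ℕ}

lemma jf_succ (i : ℕ) : jf p s (i + 1) = jf p s i + p ^ (jf p s i) := by
  simp [jf, Function.iterate_succ_apply', cf]

lemma jf_strictMono (hp : 1 < p) : StrictMono (jf p s) := by
  apply strictMono_nat_of_lt_succ
  intro i
  rw [jf_succ]
  have : 0 < p ^ (jf p s i) := pow_pos (by omega) _
  omega

lemma jf_mono (hp : 1 < p) : Monotone (jf p s) := (jf_strictMono hp).monotone

lemma jf_add_sum (hp : 1 < p) (i m : ℕ) :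
    jf p s i + ∑ l ∈ Finset.Ico i (i + m), p ^ (jf p s l) = jf p s (i + m) := by
  induction m with
  | zero => simp
  | succ m ih =>
    rw [show i + (m+1) = (i+m) + 1 by ring, Finset.sum_Ico_succ_top (by omega), jf_succ]
    omega

lemma jf_sub (hp : 1 < p) (i : ℕ) (hin : i ≤ n) :
    jf p s n - jf p s i = ∑ l ∈ Finset.Ico i n, p ^ (jf p s l) := by
  have := jf_add_sum (s := s) hp i (n - i)
  rw [show i + (n - i) = n by omega] at this
  omega

lemma pow_mul_tf (hp : 1 < p) (i : ℕ) (hin : i ≤ n) :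
    p ^ (jf p s i) * tf p s n i = jf p s n - jf p s i := by
  rw [jf_sub hp i hin, tf, Finset.mul_sum]
  apply Finset.sum_congr rfl
  intro l hl
  simp only [Finset.mem_Ico] at hl
  rw [← pow_add, Nat.add_sub_cancel' (jf_mono hp hl.1)]

lemma not_dvd_tf (hp : 1 < p) (i : ℕ) (hin : i < n) : ¬ p ∣ tf p s n i := by
  rw [tf, Finset.sum_eq_sum_Ico_succ_bot hin, Nat.sub_self, pow_zero]
  intro h
  have hd : p ∣ ∑ l ∈ Finset.Ico (i+1) n, p ^ (jf p s l - jf p s i) := by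
    apply Finset.dvd_sum
    intro l hl
    simp only [Finset.mem_Ico] at hl
    have : jf p s i < jf p s l := jf_strictMono hp (by omega)
    exact dvd_pow (dvd_refl p) (by omega)
  have h1 : p ∣ 1 := (Nat.dvd_add_right hd).mp (by rwa [Nat.add_comm] at h)
  have := Nat.le_of_dvd one_pos h1
  omega

lemma tf_pos (hp : 1 < p) (i : ℕ) (hin : i < n) : 0 < tf p s n i := by
  rcases Nat.eq_zero_or_pos (tf p s n i) with h | h
  · exact absurd (h ▸ dvd_zero p) (not_dvd_tf hp i hin)
  · exact h

lemma not_dvd_wf (hp : p.Prime) (hn : 0 < n) : ¬ p ∣ wf p s n := by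
  rw [wf, Prime.dvd_finset_prod_iff hp.prime]
  rintro ⟨i, hi, hdvd⟩
  exact not_dvd_tf hp.one_lt i (Finset.mem_range.mp hi) hdvd

lemma wf_pos (hp : p.Prime) (hn : 0 < n) : 0 < wf p s n := by
  rcases Nat.eq_zero_or_pos (wf p s n) with h | h
  · exact absurd (h ▸ dvd_zero p) (not_dvd_wf hp hn)
  · exact h

lemma wf_eq (i : ℕ) (hin : i < n) : wf p s n = tf p s n i * Wf p s n i :=
  (Finset.mul_prod_erase _ _ (Finset.mem_range.mpr hin)).symm

lemma not_dvd_Wf (hp : p.Prime) (hn : 0 < n) (i : ℕ) (hin : i < n) : ¬ p ∣ Wf p s n i := by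
  intro h
  exact not_dvd_wf hp hn (h.trans ⟨tf p s n i, by rw [wf_eq i hin]; ring⟩)

lemma Wf_pos (hp : p.Prime) (hn : 0 < n) (i : ℕ) (hin : i < n) : 0 < Wf p s n i := by
  rcases Nat.eq_zero_or_pos (Wf p s n i) with h | h
  · exact absurd (h ▸ dvd_zero p) (not_dvd_Wf hp hn i hin)
  · exact h

/-- locate k in the chain intervals -/
lemma exists_interval (hp1 : 1 < p) {k m : ℕ} (h0 : jf p s 0 ≤ k) (h1 : k < jf p s m) :
    ∃ i, i < m ∧ jf p s i ≤ k ∧ k < jf p s (i + 1) := by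
  induction m with
  | zero => omega
  | succ m ih =>
    by_cases hkm : k < jf p s m
    · obtain ⟨i, hi1, hi2, hi3⟩ := ih hkm
      exact ⟨i, by omega, hi2, hi3⟩
    · exact ⟨m, by omega, by omega, h1⟩

/-- The key uniqueness lemma: any k < N with ord_p(N - k) = k is a chain element. -/
lemma chainA (hp : p.Prime) (hs : 0 < s) (hn : 0 < n) {k : ℕ} (hkN : k < jf p s n)
    (hd : p ^ k ∣ jf p s n - k) (hnd : ¬ p ^ (k + 1) ∣ jf p s n - k) :
    ∃ i, i < n ∧ k = jf p s i := by
  have hp1 : 1 < p := hp.one_lt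
  set N := jf p s n with hN
  have ha : jf p s 0 = p ^ s := rfl
  by_cases hka : k < p ^ s
  · -- k below the start of the chain: contradiction
    exfalso
    -- N - p^s = p^(p^s) * tf 0, and p^s ≤ N
    have h0n : (0:ℕ) ≤ n := Nat.zero_le n
    have haN : p ^ s ≤ N := ha ▸ jf_mono hp1 (Nat.zero_le n)
    have hNa : p ^ (p ^ s) * tf p s n 0 = N - p ^ s := by
      have := pow_mul_tf (s := s) (n := n) hp1 0 (Nat.zero_le n)
      rwa [ha] at this
    rcases Nat.eq_zero_or_pos k with hk0 | hk0
    · -- k = 0 : then p ∤ N, but p ∣ N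
      subst hk0
      apply hnd
      rw [pow_one, Nat.sub_zero]
      -- p ∣ N since N = p^s + p^(p^s) * tf 0
      have hNdecomp : N = p ^ s + p ^ (p ^ s) * tf p s n 0 := by omega
      rw [hNdecomp]
      exact Nat.dvd_add (dvd_pow (dvd_refl p) (by omega))
        (Dvd.dvd.mul_right (dvd_pow (dvd_refl p) (by positivity)) _)
    · -- 0 < k < p^s
      -- p^k ∣ N - k and p^k ∣ N - p^s (since k < p^s ≤ p^(p^s)) so p^k ∣ p^s - k
      have hsp : s < p ^ s := Nat.lt_pow_self (n := s) hp1
      have hsps : p ^ s ≤ p ^ (p ^ s) := Nat.pow_le_pow_right (by omega) (by omega)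
      have hdvd2 : p ^ k ∣ N - p ^ s := by
        rw [← hNa]
        exact Dvd.dvd.mul_right (pow_dvd_pow p (by omega)) _
      have hdvd3 : p ^ k ∣ p ^ s - k := by
        have h1 := Nat.dvd_sub hd hdvd2
        have h2 : (N - k) - (N - p ^ s) = p ^ s - k := by omega
        rwa [h2] at h1
      by_cases hks : k ≤ s
      · -- p^k ∣ p^s so p^k ∣ k
        have h5 : p ^ k ∣ k := by
          have h2 : p ^ k ∣ p ^ s := pow_dvd_pow p hks
          have h6 := Nat.dvd_sub h2 hdvd3
          have h3 : (p ^ s) - (p ^ s - k) = k := by omega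
          rwa [h3] at h6
        have := Nat.le_of_dvd hk0 h5
        have := Nat.lt_pow_self (n := k) hp1
        omega
      · -- s < k : p^s ∣ p^k ∣ p^s - k so p^s ∣ k, contradiction with k < p^s
        have h2 : p ^ s ∣ p ^ s - k := (pow_dvd_pow p (by omega)).trans hdvd3
        have h3 : p ^ s ∣ k := by
          have h6 := Nat.dvd_sub (dvd_refl (p ^ s)) h2
          have h4 : p ^ s - (p ^ s - k) = k := by omega
          rwa [h4] at h6
        have := Nat.le_of_dvd hk0 h3
        omega
  · -- p^s ≤ k < N: find interval
    push_neg at hka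
    obtain ⟨i, hin, hik, hki⟩ := exists_interval hp1 (by rw [ha]; omega) hkN
    rcases Nat.eq_or_lt_of_le hik with heq | hlt
    · exact ⟨i, hin, heq.symm⟩
    · -- j i < k < j i + p^(j i): p^(j i) ∣ k - j i, contradiction
      exfalso
      rw [jf_succ] at hki
      have hNi : p ^ (jf p s i) * tf p s n i = N - jf p s i :=
        pow_mul_tf hp1 i (le_of_lt hin)
      have hd1 : p ^ (jf p s i) ∣ N - k := (pow_dvd_pow p (by omega)).trans hd
      have hd2 : p ^ (jf p s i) ∣ N - jf p s i := ⟨tf p s n i, by omega⟩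
      have hd3 : p ^ (jf p s i) ∣ k - jf p s i := by
        have h4 : (N - jf p s i) - (N - k) = k - jf p s i := by omega
        rw [← h4]
        exact Nat.dvd_sub hd2 hd1
      have := Nat.le_of_dvd (by omega) hd3
      omega

lemma fact_pow_mul (hp : p.Prime) (e W : ℕ) (hW : ¬ p ∣ W) :
    (p ^ e * W).factorization p = e := by
  have hW0 : W ≠ 0 := fun h => hW (h ▸ dvd_zero p)
  have hp0 : p ^ e ≠ 0 := pow_ne_zero e hp.pos.ne'
  rw [Nat.factorization_mul hp0 hW0]
  simp [hp.factorization_pow, Nat.factorization_eq_zero_of_not_dvd hW]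

lemma padicValInt_nat (hp : p.Prime) (X : ℕ) :
    padicValInt p (X : ℤ) = X.factorization p := by
  rw [padicValInt.of_nat, Nat.factorization_def _ hp]

lemma padicValInt_xf (hp : p.Prime) (hn : 0 < n) (i : ℕ) (hin : i < n) :
    padicValInt p ((xf p s n i : ℕ) : ℤ) = jf p s n - jf p s i := by
  rw [padicValInt_nat hp, xf, fact_pow_mul hp _ _ (not_dvd_Wf hp hn i hin)]

lemma jf_lt (hp1 : 1 < p) (i : ℕ) (hin : i < n) : jf p s i < jf p s n :=
  jf_strictMono hp1 hin

/-- the natural-number core computation -/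
lemma xf_core (hp : p.Prime) (i : ℕ) (hin : i < n) :
    p ^ (jf p s n - jf p s i - 1) * Wf p s n i * (jf p s n - jf p s i) = vf p s n := by
  have hp1 : 1 < p := hp.one_lt
  have hji : jf p s i < jf p s n := jf_lt hp1 i hin
  set E := jf p s n - jf p s i - 1 with hE
  rw [← pow_mul_tf hp1 i (le_of_lt hin), vf, wf_eq i hin,
    show jf p s n - 1 = E + jf p s i by omega, pow_add]
  ring

lemma dp_xf (hp : p.Prime) (hn : 0 < n) (i : ℕ) (hin : i < n) :
    Dp p ((xf p s n i : ℕ) : ℤ) = ((vf p s n : ℕ) : ℤ) := by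
  have hp1 : 1 < p := hp.one_lt
  have hji : jf p s i < jf p s n := jf_lt hp1 i hin
  have hxf : (xf p s n i : ℤ) = (p : ℤ) * ((p ^ (jf p s n - jf p s i - 1) * Wf p s n i : ℕ) : ℤ) := by
    rw [xf, show jf p s n - jf p s i = (jf p s n - jf p s i - 1) + 1 by omega]
    push_cast [pow_succ]
    ring
  rw [Dp, padicValInt_xf hp hn i hin, hxf, Int.mul_ediv_cancel_left _ (by exact_mod_cast hp.pos.ne')]
  rw [← xf_core hp i hin]
  push_cast
  ring

lemma vf_pos (hp : p.Prime) (hn : 0 < n) : 0 < vf p s n :=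
  Nat.mul_pos (pow_pos hp.pos _) (wf_pos hp hn)

lemma N_pos (hp : p.Prime) : 0 < jf p s n := by
  have h1 : jf p s 0 ≤ jf p s n := jf_mono hp.one_lt (Nat.zero_le n)
  have h2 : (0:ℕ) < p ^ s := pow_pos hp.pos _
  have h3 : jf p s 0 = p ^ s := rfl
  omega

lemma dp_backward (hp : p.Prime) (hs : 0 < s) (hn : 0 < n) {x : ℤ}
    (hx : Dp p x = ((vf p s n : ℕ) : ℤ)) : ∃ i, i < n ∧ x = ((xf p s n i : ℕ) : ℤ) := by
  have hp1 : 1 < p := hp.one_lt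
  have hv : 0 < vf p s n := vf_pos hp hn
  have hvz : (0:ℤ) < ((vf p s n : ℕ) : ℤ) := by exact_mod_cast hv
  -- the valuation of x is positive
  have hkx : padicValInt p x ≠ 0 := by
    intro h
    rw [Dp, h] at hx
    simp at hx
    omega
  -- x is positive
  have hxpos : 0 < x := by
    rcases lt_trichotomy x 0 with h | h | h
    · exfalso
      have hdiv : x / (p:ℤ) < 0 := Int.ediv_neg_of_neg_of_pos h (by exact_mod_cast hp.pos)
      have hkpos : (0:ℤ) < (padicValInt p x : ℤ) := by
        exact_mod_cast Nat.pos_of_ne_zero hkx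
      have : Dp p x < 0 := mul_neg_of_neg_of_pos hdiv hkpos
      omega
    · exfalso; rw [h] at hx; simp [Dp] at hx; omega
    · exact h
  set X := x.toNat with hXdef
  have hX : (X : ℤ) = x := Int.toNat_of_nonneg (le_of_lt hxpos)
  have hX0 : X ≠ 0 := by
    intro h
    rw [h] at hX
    omega
  set k := X.factorization p with hkdef
  have hpvk : padicValInt p x = k := by
    rw [← hX, padicValInt_nat hp]
  have hk1 : 1 ≤ k := by
    rw [hpvk] at hkx
    omega
  obtain ⟨m, hm⟩ : p ^ k ∣ X := Nat.ordProj_dvd X p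
  have hm0 : m ≠ 0 := by
    intro h
    rw [h, mul_zero] at hm
    exact hX0 hm
  have hpm : ¬ p ∣ m := by
    rintro ⟨c, hc⟩
    apply Nat.pow_succ_factorization_not_dvd hX0 hp
    rw [← hkdef, hm, hc, pow_succ]
    exact ⟨c, by ring⟩
  -- rewrite Dp x as a natural number computation
  have hxeq : x = (p : ℤ) * ((p ^ (k - 1) * m : ℕ) : ℤ) := by
    rw [← hX, hm, show k = (k - 1) + 1 by omega]
    push_cast [pow_succ]
    ring
  have hdp : Dp p x = ((p ^ (k - 1) * m * k : ℕ) : ℤ) := by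
    rw [Dp, hpvk, hxeq, Int.mul_ediv_cancel_left _ (by exact_mod_cast hp.pos.ne')]
    push_cast
    ring
  have E : p ^ (k - 1) * m * k = vf p s n := by
    have := hdp.symm.trans hx
    exact_mod_cast this
  -- compare p-adic valuations
  set N := jf p s n with hNdef
  have hN1 : 1 ≤ N := N_pos hp
  set jj := k.factorization p with hjjdef
  have hfac : (k - 1) + jj = N - 1 := by
    have h1 := congrArg (fun t => t.factorization p) E
    have hL : (p ^ (k - 1) * m * k).factorization p = (k - 1) + jj := by
      rw [Nat.factorization_mul (by positivity) (by omega)]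
      simp [fact_pow_mul hp _ _ hpm, ← hjjdef]
    have hR : (vf p s n).factorization p = N - 1 := by
      rw [vf, fact_pow_mul hp _ _ (not_dvd_wf hp hn)]
    rw [hL, hR] at h1
    exact h1
  have hkN : k + jj = N := by omega
  have hjjN : jj < N := by omega
  have hNk : N - jj = k := by omega
  obtain ⟨i, hin, hji⟩ := chainA hp hs hn hjjN (hNk ▸ Nat.ordProj_dvd k p)
    (hNk ▸ Nat.pow_succ_factorization_not_dvd (by omega) hp)
  have hkti : p ^ (jf p s i) * tf p s n i = k := by
    rw [pow_mul_tf hp1 i (le_of_lt hin), ← hNdef, ← hji, hNk]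
  -- cancel to get m = Wf i
  have hmW : m = Wf p s n i := by
    have E2 : p ^ (N - 1) * (tf p s n i * m) = p ^ (N - 1) * (tf p s n i * Wf p s n i) := by
      have lhs : p ^ (k - 1) * m * k = p ^ (N - 1) * (tf p s n i * m) := by
        set e := k - 1 with he
        rw [← hkti, show N - 1 = e + jf p s i by omega, pow_add]
        ring
      have rhs : vf p s n = p ^ (N - 1) * (tf p s n i * Wf p s n i) := by
        rw [vf, wf_eq i hin, ← hNdef]
      rw [← lhs, ← rhs]
      exact E
    have h3 := Nat.eq_of_mul_eq_mul_left (pow_pos hp.pos _) E2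
    exact Nat.eq_of_mul_eq_mul_left (tf_pos hp1 i hin) h3
  refine ⟨i, hin, ?_⟩
  rw [← hX, hm, hmW, xf, ← hji, hNk]

lemma fiber_eq (hp : p.Prime) (hs : 0 < s) (hn : 0 < n) :
    {x : ℤ | Dp p x = ((vf p s n : ℕ) : ℤ)} =
      ↑((Finset.range n).image (fun i => ((xf p s n i : ℕ) : ℤ))) := by
  ext x
  simp only [Set.mem_setOf_eq, Finset.coe_image, Set.mem_image, Finset.mem_coe,
    Finset.mem_range]
  constructor
  · intro h
    obtain ⟨i, hin, hxe⟩ := dp_backward hp hs hn h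
    exact ⟨i, hin, hxe.symm⟩
  · rintro ⟨i, hin, rfl⟩
    exact dp_xf hp hn i hin

lemma fiber_ncard (hp : p.Prime) (hs : 0 < s) (hn : 0 < n) :
    {x : ℤ | Dp p x = ((vf p s n : ℕ) : ℤ)}.ncard = n := by
  rw [fiber_eq hp hs hn, Set.ncard_coe_finset,
    Finset.card_image_of_injOn, Finset.card_range]
  intro i hi i' hi' he
  simp only [Finset.coe_range, Set.mem_Iio] at hi hi'
  have h1 := padicValInt_xf (s := s) hp hn i hi
  have h2 := padicValInt_xf (s := s) hp hn i' hi'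
  simp only at he
  rw [he, h2] at h1
  have hji : jf p s i < jf p s n := jf_lt hp.one_lt i hi
  have hji' : jf p s i' < jf p s n := jf_lt hp.one_lt i' hi'
  exact (jf_strictMono (s := s) hp.one_lt).injective (by omega)

lemma padicValInt_vf (hp : p.Prime) (hn : 0 < n) :
    padicValInt p ((vf p s n : ℕ) : ℤ) = jf p s n - 1 := by
  rw [padicValInt_nat hp, vf, fact_pow_mul hp _ _ (not_dvd_wf hp hn)]

lemma cf_strictMono (hp1 : 1 < p) : StrictMono (cf p) := by
  intro a b h
  have := Nat.pow_lt_pow_right hp1 h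
  simp only [cf]
  omega

lemma N_strictMono (hp1 : 1 < p) {s1 s2 : ℕ} (h : s1 < s2) : jf p s1 n < jf p s2 n := by
  have h1 : p ^ s1 < p ^ s2 := Nat.pow_lt_pow_right hp1 h
  exact ((cf_strictMono hp1).iterate n) h1

end DpAux

theorem infinitely_many_with_n_antiderivatives (p : ℕ) (hp : p.Prime) (n : ℕ) (hn : 0 < n) :
    {x₀ : ℤ | {x : ℤ | Dp p x = Dp p x₀}.ncard = n}.Infinite := by
  apply Set.infinite_of_injective_forall_mem
    (f := fun s : ℕ => ((DpAux.xf p (s + 1) n 0 : ℕ) : ℤ))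
  case hi =>
    intro s1 s2 he
    simp only at he
    have hd1 : Dp p ((DpAux.xf p (s1 + 1) n 0 : ℕ) : ℤ) = ((DpAux.vf p (s1 + 1) n : ℕ) : ℤ) :=
      DpAux.dp_xf hp hn 0 hn
    have hd2 : Dp p ((DpAux.xf p (s2 + 1) n 0 : ℕ) : ℤ) = ((DpAux.vf p (s2 + 1) n : ℕ) : ℤ) :=
      DpAux.dp_xf hp hn 0 hn
    rw [he, hd2] at hd1
    have hv := congrArg (padicValInt p) hd1
    rw [DpAux.padicValInt_vf hp hn, DpAux.padicValInt_vf hp hn] at hv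
    have hN1 : 0 < DpAux.jf p (s1 + 1) n := DpAux.N_pos hp
    have hN2 : 0 < DpAux.jf p (s2 + 1) n := DpAux.N_pos hp
    by_contra hne
    rcases Nat.lt_or_ge s1 s2 with h | h
    · have := DpAux.N_strictMono (n := n) hp.one_lt (show s1 + 1 < s2 + 1 by omega)
      omega
    · have h' : s2 < s1 := by omega
      have := DpAux.N_strictMono (n := n) hp.one_lt (show s2 + 1 < s1 + 1 by omega)
      omega
  case hf =>
    intro s
    simp only [Set.mem_setOf_eq]
    rw [DpAux.dp_xf hp hn 0 hn]
    exact DpAux.fiber_ncard hp (Nat.succ_pos s) hn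
end
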